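/- Let f : ℝ² → ℝ² be a smooth one-form-valued map α (a closed 1-form on ℝ², identified with a map ℝ² → ℝ² via a flat metric), and define ψ_r(q) = q − (r/2)·j·α(q) for r ∈ [0,1], where j is rotation by 90 degrees. If det(dψ_1(q)) > 0 for all q, then det(dψ_r(q)) > 0 for all q and all r ∈ [0,1]. -/
import Mathlib


/-- Rotation by 90 degrees on `ℝ²`. -/
def jRot (v : ℝ × ℝ) : ℝ × ℝ := (-v.2, v.1)

/-- `jRot` as a continuous linear map. -/
noncomputable def jL : (ℝ × ℝ) →L[ℝ] (ℝ × ℝ) :=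
  (-(ContinuousLinearMap.snd ℝ ℝ ℝ)).prod (ContinuousLinearMap.fst ℝ ℝ ℝ)

lemma jL_apply (v : ℝ × ℝ) : jL v = (-v.2, v.1) := rfl

/-- Explicit determinant of `I - s·(j ∘ A)` on `ℝ²`. -/
lemma det_formula (A : (ℝ × ℝ) →L[ℝ] (ℝ × ℝ)) (s : ℝ) :
    LinearMap.det ((ContinuousLinearMap.id ℝ (ℝ × ℝ)) - s • (jL.comp A)).toLinearMap =
      (1 + s * (A (1,0)).2) * (1 - s * (A (0,1)).1) + (s * (A (0,1)).2) * (s * (A (1,0)).1) := by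
  rw [← LinearMap.det_toMatrix (Module.Basis.finTwoProd ℝ), Matrix.det_fin_two]
  simp [LinearMap.toMatrix_apply, Module.Basis.finTwoProd, jL_apply]

lemma fderiv_psi (α : ℝ × ℝ → ℝ × ℝ) (hα : Differentiable ℝ α) (r : ℝ) (q : ℝ × ℝ) :
    fderiv ℝ (fun q => q - (r / 2) • jRot (α q)) q =
      (ContinuousLinearMap.id ℝ (ℝ × ℝ)) - (r / 2) • (jL.comp (fderiv ℝ α q)) := by
  have hA : HasFDerivAt α (fderiv ℝ α q) q := (hα q).hasFDerivAt
  have h2 : HasFDerivAt (fun q => jRot (α q)) (jL.comp (fderiv ℝ α q)) q :=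
    (jL.hasFDerivAt.comp q hA : )
  exact ((hasFDerivAt_id q).sub (h2.const_smul (r / 2))).fderiv

/-- Let `α` be a (smoothly varying) closed 1-form on `ℝ²`, identified with a
differentiable map `ℝ² → ℝ²` whose derivative is symmetric (closedness), and set
`ψ_r(q) = q − (r/2)·j·α(q)` for `r ∈ [0,1]`. If `det(dψ_1(q)) > 0` for all `q`,
then `det(dψ_r(q)) > 0` for all `q` and all `r ∈ [0,1]`. -/
theorem stmt12 (α : ℝ × ℝ → ℝ × ℝ) (hα : Differentiable ℝ α)
    (hclosed : ∀ q v w : ℝ × ℝ,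
      (fderiv ℝ α q v).1 * w.1 + (fderiv ℝ α q v).2 * w.2 =
        (fderiv ℝ α q w).1 * v.1 + (fderiv ℝ α q w).2 * v.2)
    (ψ : ℝ → ℝ × ℝ → ℝ × ℝ)
    (hψ : ∀ r q, ψ r q = q - (r / 2) • jRot (α q))
    (h1 : ∀ q : ℝ × ℝ, 0 < LinearMap.det (fderiv ℝ (ψ 1) q).toLinearMap) :
    ∀ r ∈ Set.Icc (0 : ℝ) 1, ∀ q : ℝ × ℝ,
      0 < LinearMap.det (fderiv ℝ (ψ r) q).toLinearMap := by
  have hψfun : ∀ r, ψ r = fun q => q - (r / 2) • jRot (α q) := fun r => funext (hψ r)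
  have key : ∀ r : ℝ, ∀ q : ℝ × ℝ,
      LinearMap.det (fderiv ℝ (ψ r) q).toLinearMap =
        (1 + (r/2) * (fderiv ℝ α q (1,0)).2) * (1 - (r/2) * (fderiv ℝ α q (0,1)).1) +
          ((r/2) * (fderiv ℝ α q (0,1)).2) * ((r/2) * (fderiv ℝ α q (1,0)).1) := by
    intro r q
    rw [hψfun r, fderiv_psi α hα r q, det_formula]
  rintro r ⟨hr0, hr1⟩ q
  have hsym : (fderiv ℝ α q (1,0)).2 = (fderiv ℝ α q (0,1)).1 := by
    simpa using hclosed q (1,0) (0,1)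
  have h1' := h1 q
  rw [key 1 q, hsym] at h1'
  rw [key r q, hsym]
  rcases eq_or_lt_of_le hr0 with h | h
  · rw [← h]; norm_num
  · nlinarith [mul_pos (pow_pos h 2) h1', sq_nonneg r, sq_nonneg (1 - r),
      mul_nonneg hr0 (sub_nonneg.2 hr1)]
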